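/- The path of r = 0.110110…₂ = 6/7 (periodic digit sequence with period '110') is bounded and eventually periodic: the net turn over one period is −1 (mod 6), the path closes after 6 periods (18 steps), and the set of lattice points visited by the infinite path is finite, of cardinality at most 18. -/

import Mathlib

open Finset

noncomputable def ω : ℂ := Complex.exp (Real.pi * Complex.I / 3)

def dir (d0 : ℤ) (z : ℕ → Fin 2) : ℕ → ℤ
  | 0 => d0
  | n + 1 => dir d0 z n + (if z n = 0 then 1 else -1)

noncomputable def pos (d0 : ℤ) (z : ℕ → Fin 2) : ℕ → ℂ
  | 0 => 0
  | n + 1 => pos d0 z n + ω ^ dir d0 z (n + 1)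

lemma hω3 : ω ^ (3:ℕ) = -1 := by
  rw [ω, ← Complex.exp_nat_mul]
  norm_num
  rw [show (3:ℂ) * (Real.pi * Complex.I / 3) = Real.pi * Complex.I by ring]
  exact Complex.exp_pi_mul_I

lemma hωne : ω ≠ 0 := Complex.exp_ne_zero _

lemma hω6 : ω ^ (6:ℕ) = 1 := by
  rw [show (6:ℕ) = 3*2 from rfl, pow_mul, hω3]; ring

lemma hshift (a : ℤ) : ω ^ (a - 6) = ω ^ a := by
  rw [zpow_sub₀ hωne, show ((6:ℤ)) = ((6:ℕ):ℤ) from rfl, zpow_natCast, hω6, div_one]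

lemma dir3 (z : ℕ → Fin 2) (hz : ∀ j, z j = if j % 3 = 2 then 0 else 1) (n : ℕ) :
    dir 0 z (n + 3) = dir 0 z n - 1 := by
  rcases (show n % 3 = 0 ∨ n % 3 = 1 ∨ n % 3 = 2 by omega) with h | h | h <;>
    simp [dir, hz, Nat.add_mod, h] <;> ring

lemma dir18 (z : ℕ → Fin 2) (hz : ∀ j, z j = if j % 3 = 2 then 0 else 1) (n : ℕ) :
    dir 0 z (n + 18) = dir 0 z n - 6 := by
  have key : ∀ k m : ℕ, dir 0 z (m + 3 * k) = dir 0 z m - k := by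
    intro k
    induction k with
    | zero => simp
    | succ k ih =>
      intro m
      have : m + 3 * (k + 1) = (m + 3 * k) + 3 := by ring
      rw [this, dir3 z hz, ih]
      push_cast; ring
  have := key 6 n
  norm_num at this
  exact this

lemma pos18 (z : ℕ → Fin 2) (hz : ∀ j, z j = if j % 3 = 2 then 0 else 1) :
    pos 0 z 18 = 0 := by
  simp [pos, dir, hz, zpow_ofNat]
  have i1 : ω⁻¹ = -ω^2 := inv_eq_of_mul_eq_one_left (by linear_combination -hω3)
  have i2 : (ω^2)⁻¹ = -ω := inv_eq_of_mul_eq_one_left (by linear_combination -hω3)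
  have i3 : (ω^3)⁻¹ = -1 := inv_eq_of_mul_eq_one_left (by linear_combination -hω3)
  have i4 : (ω^4)⁻¹ = ω^2 := inv_eq_of_mul_eq_one_left (by linear_combination (ω^3 - 1) * hω3)
  have i5 : (ω^5)⁻¹ = ω := inv_eq_of_mul_eq_one_left (by linear_combination (ω^3 - 1) * hω3)
  have i6 : (ω^6)⁻¹ = 1 := inv_eq_of_mul_eq_one_left (by linear_combination (ω^3 - 1) * hω3)
  have i7 : (ω^7)⁻¹ = -ω^2 :=
    inv_eq_of_mul_eq_one_left (by linear_combination (-(ω^6 - ω^3 + 1)) * hω3)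
  rw [i1, i2, i3, i4, i5, i6, i7]
  ring

lemma posper (z : ℕ → Fin 2) (hz : ∀ j, z j = if j % 3 = 2 then 0 else 1) (n : ℕ) :
    pos 0 z (n + 18) = pos 0 z n := by
  induction n with
  | zero => simpa [pos] using pos18 z hz
  | succ n ih =>
    have h1 : n + 1 + 18 = (n + 18) + 1 := by omega
    rw [h1]
    show pos 0 z (n + 18) + ω ^ dir 0 z ((n + 18) + 1) = pos 0 z (n + 1)
    have h2 : (n + 18) + 1 = (n + 1) + 18 := by omega
    rw [h2, ih, dir18 z hz, hshift]
    rfl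

lemma posmod (z : ℕ → Fin 2) (hz : ∀ j, z j = if j % 3 = 2 then 0 else 1) (n : ℕ) :
    pos 0 z n = pos 0 z (n % 18) := by
  induction n using Nat.strong_induction_on with
  | _ n ih =>
    by_cases h : n < 18
    · rw [Nat.mod_eq_of_lt h]
    · have h1 : n = (n - 18) + 18 := by omega
      rw [h1, posper z hz, ih (n - 18) (by omega)]
      congr 1
      omega

theorem path_of_six_sevenths_bounded
    (z : ℕ → Fin 2) (hz : ∀ j, z j = if j % 3 = 2 then 0 else 1) :
    ((((Finset.range 3).filter (fun j => z j = 0)).card : ℤ)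
      - (((Finset.range 3).filter (fun j => z j = 1)).card : ℤ) = -1) ∧
    (∀ n : ℕ, pos 0 z (n + 18) = pos 0 z n) ∧
    (∃ M : ℝ, ∀ n : ℕ, ‖pos 0 z n‖ < M) ∧
    (Set.range (pos 0 z)).Finite ∧ (Set.range (pos 0 z)).ncard ≤ 18 := by
  have hsub : Set.range (pos 0 z) ⊆ (pos 0 z) '' ((Finset.range 18 : Finset ℕ) : Set ℕ) := by
    rintro x ⟨n, rfl⟩
    exact ⟨n % 18, by simp [Nat.mod_lt n (by norm_num : 0 < 18)], (posmod z hz n).symm⟩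
  have hfin : (Set.range (pos 0 z)).Finite :=
    Set.Finite.subset (Set.Finite.image _ (Finset.finite_toSet _)) hsub
  refine ⟨?_, posper z hz, ?_, hfin, ?_⟩
  · rw [show Finset.range 3 = {0, 1, 2} by rfl]
    have h0 := hz 0; have h1 := hz 1; have h2 := hz 2
    norm_num at h0 h1 h2
    simp [Finset.filter_insert, Finset.filter_singleton, h0, h1, h2]
  · set F := (Finset.range 18).image (fun k => ‖pos 0 z k‖) with hF
    have hFne : F.Nonempty := ⟨‖pos 0 z 0‖, by rw [hF]; exact Finset.mem_image_of_mem _ (by norm_num)⟩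
    refine ⟨F.max' hFne + 1, fun n => ?_⟩
    have hmem : ‖pos 0 z n‖ ∈ F := by
      rw [posmod z hz n, hF]
      exact Finset.mem_image_of_mem _ (Finset.mem_range.mpr (Nat.mod_lt n (by norm_num)))
    have := Finset.le_max' F _ hmem
    linarith
  · calc (Set.range (pos 0 z)).ncard
        ≤ ((pos 0 z) '' ((Finset.range 18 : Finset ℕ) : Set ℕ)).ncard :=
          Set.ncard_le_ncard hsub (Set.Finite.image _ (Finset.finite_toSet _))
      _ ≤ ((Finset.range 18 : Finset ℕ) : Set ℕ).ncard :=
          Set.ncard_image_le (Finset.finite_toSet _)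
      _ = 18 := by rw [Set.ncard_coe_finset]; simp
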